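/- Let $p$ be an odd prime, $n \ge 1$, and let $\omega$ be a primitive $p^n$-th root of unity in an algebraically closed field $k$ of characteristic zero. If $V$ is a $k$-vector space of dimension $p$ and $T$ is a linear endomorphism of $V$ with $T^{2p^n} = \mathrm{id}$ and $\mathrm{Tr}(T) = 0$, then there exists $m$ with $0 \le m \le p^{n-1}-1$ such that $T^p = \omega^{mp}\,\mathrm{id}$ or $T^p = -\omega^{mp}\,\mathrm{id}$. -/

import Mathlib

open Polynomial

private lemma multiset_abs_sum_le {α : Type*} (m : Multiset α) (f : α → ℤ) :
    |(m.map f).sum| ≤ (m.map (fun x => |f x|)).sum := by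
  induction m using Multiset.induction_on with
  | empty => simp
  | cons a m ih =>
    simp only [Multiset.map_cons, Multiset.sum_cons]
    exact (abs_add_le _ _).trans (by gcongr)

private lemma multiset_sum_swap {α β : Type*} [AddCommMonoid β] (m : Multiset α) (s : Finset ℕ)
    (f : ℕ → α → β) :
    ∑ b ∈ s, (m.map (f b)).sum = (m.map (fun x => ∑ b ∈ s, f b x)).sum := by
  induction m using Multiset.induction_on with
  | empty => simp
  | cons a m ih => simp [Finset.sum_add_distrib, ih]

private lemma multiset_sum_ite_filter {α β : Type*} [AddCommMonoid β] (m : Multiset α)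
    (q : α → Prop) [DecidablePred q] (f : α → β) :
    (m.map (fun x => if q x then f x else 0)).sum = ((m.filter q).map f).sum := by
  induction m using Multiset.induction_on with
  | empty => simp
  | cons a m ih => by_cases h : q a <;> simp [Multiset.filter_cons, h, ih]

private lemma sum_range_mul' {β : Type*} [AddCommMonoid β] (f : ℕ → β) (a M : ℕ) :
    ∑ b ∈ Finset.range (a * M), f b = ∑ q ∈ Finset.range a, ∑ r ∈ Finset.range M, f (q * M + r) := by
  induction a with
  | zero => simp
  | succ a ih =>
    rw [Finset.sum_range_succ, ← ih, Nat.succ_mul, Finset.sum_range_add]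

private lemma key_lemma {k : Type*} [Field k] [CharZero k]
    (p n : ℕ) (hp : p.Prime) (hodd : Odd p) (hn : 1 ≤ n)
    (ω : k) (hω : IsPrimitiveRoot ω (p ^ n))
    (R : Multiset k) (hcard : Multiset.card R = p) (hsum : R.sum = 0)
    (hunit : ∀ x ∈ R, x ^ (2 * p ^ n) = 1) :
    ∃ m : ℕ, m < p ^ (n - 1) ∧ ∃ s : k, (s = 1 ∨ s = -1) ∧ R.Nodup ∧
      ∀ x ∈ R, x ^ p = s * ω ^ (m * p) := by
  classical
  have hp0 : 0 < p := hp.pos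
  set M := p ^ (n - 1) with hM
  set N := p ^ n with hN
  have hMp : M * p = N := by rw [hM, hN, ← pow_succ]; congr 1; omega
  have hpM : p * M = N := by rw [mul_comm]; exact hMp
  have hM0 : 0 < M := pow_pos hp.pos _
  have hN0 : 0 < N := pow_pos hp.pos _
  haveI : NeZero N := ⟨hN0.ne'⟩
  have hMN : M ≤ N := by
    calc M = M * 1 := (mul_one M).symm
    _ ≤ M * p := Nat.mul_le_mul_left M hp0
    _ = N := hMp
  have hoddN : Odd N := hodd.pow
  -- decompose each root
  have hdec : ∀ x ∈ R, ∃ e : ℤ, ∃ j : ℕ, (e = 1 ∨ e = -1) ∧ j < N ∧ x = (e : k) * ω ^ j := by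
    intro x hx
    have h2 : x ^ N * x ^ N = 1 := by
      rw [← pow_add, ← two_mul]; exact hunit x hx
    rcases mul_self_eq_one_iff.mp h2 with h | h
    · obtain ⟨i, hi, hωi⟩ := hω.eq_pow_of_pow_eq_one h
      exact ⟨1, i, Or.inl rfl, hi, by rw [hωi]; simp⟩
    · have h' : (-x) ^ N = 1 := by rw [hoddN.neg_pow, h, neg_neg]
      obtain ⟨i, hi, hωi⟩ := hω.eq_pow_of_pow_eq_one h'
      refine ⟨-1, i, Or.inr rfl, hi, ?_⟩
      rw [hωi]; push_cast; ring
  choose! e j hsgn hjlt hxej using hdec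
  -- the integer polynomial
  set P : Polynomial ℤ := (R.map (fun x => C (e x) * X ^ (j x))).sum with hPdef
  have hcoeff : ∀ b : ℕ, P.coeff b = (R.map (fun x => if j x = b then e x else 0)).sum := by
    intro b
    rw [hPdef, ← Polynomial.lcoeff_apply, map_multiset_sum, Multiset.map_map]
    refine congrArg Multiset.sum (Multiset.map_congr rfl fun x _ => ?_)
    by_cases h : j x = b
    · simp [Polynomial.lcoeff_apply, Polynomial.coeff_X_pow, h]
    · simp only [Function.comp_apply, Polynomial.lcoeff_apply, Polynomial.coeff_C_mul,
        Polynomial.coeff_X_pow]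
      rw [if_neg (fun hb => h hb.symm), if_neg h, mul_zero]
  have hPω : (aeval ω) P = 0 := by
    rw [hPdef, map_multiset_sum, Multiset.map_map, ← hsum]
    refine congrArg Multiset.sum ?_
    have : Multiset.map (⇑(aeval ω) ∘ fun x => C (e x) * X ^ j x) R = Multiset.map id R :=
      Multiset.map_congr rfl fun x hx => by
        simp only [Function.comp_apply, map_mul, aeval_C, map_pow, aeval_X, id_eq,
          algebraMap_int_eq, eq_intCast, map_intCast]
        exact (hxej x hx).symm
    rw [this, Multiset.map_id]
  -- divisibility by the cyclotomic polynomial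
  have hcyc : Polynomial.cyclotomic N ℤ = ∑ i ∈ Finset.range p, ((X : ℤ[X]) ^ M) ^ i := by
    have h1 : N = p ^ ((n-1) + 1) := by rw [hN]; congr 1; omega
    rw [h1, Polynomial.cyclotomic_prime_pow_eq_geom_sum hp, ← hM]
  have hΦ0 : Polynomial.cyclotomic N ℤ ≠ 0 := Polynomial.cyclotomic_ne_zero N ℤ
  have hdvd : Polynomial.cyclotomic N ℤ ∣ P := by
    rw [Polynomial.cyclotomic_eq_minpoly hω hN0]
    exact minpoly.isIntegrallyClosed_dvd (hω.isIntegral hN0) hPω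
  obtain ⟨Q, hQ⟩ := hdvd
  -- eval at 1
  have hΦ1 : (Polynomial.cyclotomic N ℤ).eval 1 = p := by
    rw [hcyc]
    simp [Polynomial.eval_finset_sum]
  have hP1 : P.eval 1 = (R.map e).sum := by
    rw [hPdef, ← Polynomial.coe_evalRingHom, map_multiset_sum, Multiset.map_map]
    refine congrArg Multiset.sum (Multiset.map_congr rfl fun x _ => ?_)
    simp
  have hcast2 : ((P.eval 1 : ℤ) : ZMod 2) = 1 := by
    rw [hP1, show (((Multiset.map e R).sum : ℤ) : ZMod 2)
      = (Int.castRingHom (ZMod 2)) (Multiset.map e R).sum from rfl,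
      map_multiset_sum (Int.castRingHom (ZMod 2)), Multiset.map_map]
    have h1 : Multiset.map (⇑(Int.castRingHom (ZMod 2)) ∘ e) R
        = Multiset.map (fun _ => (1 : ZMod 2)) R :=
      Multiset.map_congr rfl fun x hx => by
        rcases hsgn x hx with h | h <;> simp [h] <;> decide
    rw [h1, Multiset.map_const', Multiset.sum_replicate, hcard]
    obtain ⟨t, ht⟩ := hodd
    rw [nsmul_eq_mul, mul_one, ht]
    push_cast
    rw [show ((2:ZMod 2)) = 0 from rfl]
    ring
  have hPe : P.eval 1 = (p : ℤ) * Q.eval 1 := by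
    rw [hQ, Polynomial.eval_mul, hΦ1]
  have hQ1ne : Q.eval 1 ≠ 0 := by
    intro h0
    rw [hPe, h0, mul_zero] at hcast2
    simp at hcast2
  have hQ0 : Q ≠ 0 := fun h0 => hQ1ne (by rw [h0]; simp)
  have hP0 : P ≠ 0 := by rw [hQ]; exact mul_ne_zero hΦ0 hQ0
  -- Q.eval 1 is odd
  have hQodd : ¬ (2 : ℤ) ∣ Q.eval 1 := by
    intro ⟨t, ht⟩
    rw [hPe, ht] at hcast2
    push_cast at hcast2
    rw [show ((2:ZMod 2)) = 0 from rfl] at hcast2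
    simp at hcast2
  -- degrees
  have hcoeff_big : ∀ b, N ≤ b → P.coeff b = 0 := by
    intro b hb
    rw [hcoeff b]
    have h1 : Multiset.map (fun x => if j x = b then e x else 0) R
        = Multiset.map (fun _ => (0:ℤ)) R :=
      Multiset.map_congr rfl fun x hx => by
        rw [if_neg]
        have := hjlt x hx
        omega
    rw [h1]
    simp
  have hdegP : P.natDegree < N := by
    by_contra h
    exact Polynomial.leadingCoeff_ne_zero.mpr hP0 (hcoeff_big _ (le_of_not_gt h))
  have hdegΦ : (Polynomial.cyclotomic N ℤ).natDegree = N - M := by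
    rw [hN, Polynomial.natDegree_cyclotomic, Nat.totient_prime_pow hp (by omega)]
    rw [mul_comm, tsub_mul, one_mul, ← hM, hpM, hN]
  have hdegQ : Q.natDegree < M := by
    have h1 := Polynomial.natDegree_mul hΦ0 hQ0
    rw [← hQ, hdegΦ] at h1
    omega
  -- coefficient relation
  have hcr : ∀ q < p, ∀ r < M, P.coeff (q * M + r) = Q.coeff r := by
    intro q hq r hr
    rw [hQ, hcyc, Finset.sum_mul, Polynomial.finset_sum_coeff]
    rw [Finset.sum_eq_single q]
    · rw [← pow_mul, mul_comm ((X:ℤ[X]) ^ (M * q)) Q, Polynomial.coeff_mul_X_pow',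
        if_pos (by rw [mul_comm M q]; omega)]
      congr 1
      rw [mul_comm M q]
      omega
    · intro i hi hiq
      rw [← pow_mul, mul_comm ((X:ℤ[X]) ^ (M * i)) Q, Polynomial.coeff_mul_X_pow']
      rcases lt_or_gt_of_ne hiq with h | h
      · have h1 : M * i + M ≤ M * q := by
          calc M * i + M = M * (i + 1) := by ring
          _ ≤ M * q := Nat.mul_le_mul_left M h
        have h2 : M * q = q * M := mul_comm M q
        rw [if_pos (by omega)]
        exact Polynomial.coeff_eq_zero_of_natDegree_lt (by omega)
      · have h1 : M * q + M ≤ M * i := by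
          calc M * q + M = M * (q + 1) := by ring
          _ ≤ M * i := Nat.mul_le_mul_left M h
        have h2 : M * q = q * M := mul_comm M q
        rw [if_neg (by omega)]
    · intro hq'
      exact absurd (Finset.mem_range.mpr hq) hq'
  -- sum of |coeffs| bounded by p
  have habs_le : ∑ b ∈ Finset.range N, |P.coeff b| ≤ (p : ℤ) := by
    calc ∑ b ∈ Finset.range N, |P.coeff b|
        ≤ ∑ b ∈ Finset.range N, (R.map (fun x => |if j x = b then e x else 0|)).sum :=
          Finset.sum_le_sum fun b _ => by rw [hcoeff b]; exact multiset_abs_sum_le R _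
      _ = (R.map (fun x => ∑ b ∈ Finset.range N, |if j x = b then e x else 0|)).sum :=
          multiset_sum_swap R _ _
      _ = (R.map (fun _ => (1:ℤ))).sum := by
          refine congrArg Multiset.sum (Multiset.map_congr rfl fun x hx => ?_)
          have h2 : ∀ b, |if j x = b then e x else 0| = if j x = b then |e x| else 0 := by
            intro b; split <;> simp
          simp_rw [h2]
          rw [Finset.sum_ite_eq (Finset.range N) (j x) (fun _ => |e x|),
            if_pos (Finset.mem_range.mpr (hjlt x hx))]
          rcases hsgn x hx with h | h <;> simp [h]
      _ = (p : ℤ) := by rw [Multiset.map_const', Multiset.sum_replicate, hcard]; simp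
  -- reindex sums over range N
  have hsplitN : ∀ g : ℕ → ℤ, ∑ b ∈ Finset.range N, g b
      = ∑ q ∈ Finset.range p, ∑ r ∈ Finset.range M, g (q * M + r) := by
    intro g; rw [← hpM]; exact sum_range_mul' g p M
  have habs_eq : ∑ b ∈ Finset.range N, |P.coeff b|
      = (p:ℤ) * ∑ r ∈ Finset.range M, |Q.coeff r| := by
    rw [hsplitN]
    rw [Finset.sum_congr rfl (fun q hq => Finset.sum_congr rfl (fun r hr => by
      rw [hcr q (Finset.mem_range.mp hq) r (Finset.mem_range.mp hr)]))]
    rw [Finset.sum_const, Finset.card_range, nsmul_eq_mul]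
  have hdsum_le : ∑ r ∈ Finset.range M, |Q.coeff r| ≤ 1 := by
    have h1 : (p:ℤ) * ∑ r ∈ Finset.range M, |Q.coeff r| ≤ (p:ℤ) * 1 := by
      rw [mul_one, ← habs_eq]; exact habs_le
    exact le_of_mul_le_mul_left h1 (by exact_mod_cast hp0)
  have hQeval : Q.eval 1 = ∑ r ∈ Finset.range M, Q.coeff r := by
    rw [Polynomial.eval_eq_sum_range' hdegQ]
    simp
  have hs'_le : |Q.eval 1| ≤ 1 := by
    rw [hQeval]
    exact (Finset.abs_sum_le_sum_abs _ _).trans hdsum_le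
  have hs' : Q.eval 1 = 1 ∨ Q.eval 1 = -1 := by
    have h1 := abs_le.mp hs'_le
    rcases lt_trichotomy (Q.eval 1) 0 with h|h|h
    · right; omega
    · exact absurd h hQ1ne
    · left; omega
  -- unique nonzero coefficient of Q
  have hdsum_ne : ∑ r ∈ Finset.range M, Q.coeff r ≠ 0 := by rw [← hQeval]; exact hQ1ne
  obtain ⟨r0, hr0mem, hr0ne⟩ := Finset.exists_ne_zero_of_sum_ne_zero hdsum_ne
  have hr0 : r0 < M := Finset.mem_range.mp hr0mem
  have hrest : ∀ r < M, r ≠ r0 → Q.coeff r = 0 := by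
    intro r hr hrne
    have h2 := Finset.add_sum_erase (Finset.range M) (fun r => |Q.coeff r|) hr0mem
    have h3 : (1:ℤ) ≤ |Q.coeff r0| := Int.one_le_abs hr0ne
    have h1 : ∑ r' ∈ (Finset.range M).erase r0, |Q.coeff r'| ≤ 0 := by linarith [hdsum_le]
    have h4 := (Finset.sum_eq_zero_iff_of_nonneg (fun i _ => abs_nonneg _)).mp
      (le_antisymm h1 (Finset.sum_nonneg fun i _ => abs_nonneg _))
    exact abs_eq_zero.mp (h4 r (Finset.mem_erase.mpr ⟨hrne, Finset.mem_range.mpr hr⟩))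
  have hdr0 : Q.coeff r0 = Q.eval 1 := by
    rw [hQeval, Finset.sum_eq_single_of_mem r0 hr0mem
      (fun r hr hrne => hrest r (Finset.mem_range.mp hr) hrne)]
  have habs1 : |Q.eval 1| = 1 := by rcases hs' with h|h <;> rw [h] <;> simp
  have hdabs1 : ∑ r ∈ Finset.range M, |Q.coeff r| = 1 := by
    have hge : (1:ℤ) ≤ ∑ r ∈ Finset.range M, |Q.coeff r| := by
      calc (1:ℤ) = |Q.eval 1| := habs1.symm
      _ = |∑ r ∈ Finset.range M, Q.coeff r| := by rw [hQeval]
      _ ≤ _ := Finset.abs_sum_le_sum_abs _ _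
    linarith [hdsum_le]
  -- counts
  set cnt : ℕ → ℤ := fun b => ((Multiset.card (R.filter (fun x => j x = b))) : ℤ) with hcnt
  have hcoeff_filter : ∀ b, P.coeff b = ((R.filter (fun x => j x = b)).map e).sum := by
    intro b; rw [hcoeff b, multiset_sum_ite_filter]
  have habs_cnt : ∀ b, |P.coeff b| ≤ cnt b := by
    intro b
    rw [hcoeff_filter b]
    refine (multiset_abs_sum_le _ _).trans ?_
    have h1 : Multiset.map (fun x => |e x|) (R.filter (fun x => j x = b))
        = Multiset.map (fun _ => (1:ℤ)) (R.filter (fun x => j x = b)) :=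
      Multiset.map_congr rfl fun x hx => by
        rcases hsgn x (Multiset.mem_of_mem_filter hx) with h | h <;> simp [h]
    rw [h1, Multiset.map_const', Multiset.sum_replicate]
    simp [hcnt]
  have hcnt_sum : ∑ b ∈ Finset.range N, cnt b = (p:ℤ) := by
    have h1 : ∀ b, cnt b = (R.map (fun x => if j x = b then (1:ℤ) else 0)).sum := by
      intro b
      rw [multiset_sum_ite_filter R _ (fun _ => (1:ℤ)), Multiset.map_const',
        Multiset.sum_replicate]
      simp [hcnt]
    rw [Finset.sum_congr rfl fun b _ => h1 b, multiset_sum_swap]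
    have h2 : Multiset.map (fun x => ∑ b ∈ Finset.range N, if j x = b then (1:ℤ) else 0) R
        = Multiset.map (fun _ => (1:ℤ)) R :=
      Multiset.map_congr rfl fun x hx => by
        rw [Finset.sum_ite_eq (Finset.range N) (j x) (fun _ => (1:ℤ)),
          if_pos (Finset.mem_range.mpr (hjlt x hx))]
    rw [h2, Multiset.map_const', Multiset.sum_replicate, hcard]; simp
  have habs_eq_p : ∑ b ∈ Finset.range N, |P.coeff b| = (p:ℤ) := by
    rw [habs_eq, hdabs1, mul_one]
  have hterm : ∀ b ∈ Finset.range N, |P.coeff b| = cnt b := by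
    by_contra hcon
    push_neg at hcon
    obtain ⟨b0, hb0, hbne⟩ := hcon
    have hlt : ∑ b ∈ Finset.range N, |P.coeff b| < ∑ b ∈ Finset.range N, cnt b :=
      Finset.sum_lt_sum (fun b _ => habs_cnt b) ⟨b0, hb0, lt_of_le_of_ne (habs_cnt b0) hbne⟩
    rw [habs_eq_p, hcnt_sum] at hlt
    exact lt_irrefl _ hlt
  -- per-element structure
  have hmain : ∀ x ∈ R, j x % M = r0 ∧ e x = Q.eval 1 ∧
      Multiset.card (R.filter (fun y => j y = j x)) = 1 := by
    intro x hx
    set b := j x with hb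
    have hbN : b < N := hjlt x hx
    have hbq : b / M < p := (Nat.div_lt_iff_lt_mul hM0).mpr (by rw [hpM]; exact hbN)
    have hbsplit : (b / M) * M + b % M = b := by
      rw [mul_comm]; exact Nat.div_add_mod b M
    have hPb : P.coeff b = Q.coeff (b % M) := by
      have h1 := hcr (b / M) hbq (b % M) (Nat.mod_lt b hM0)
      rw [hbsplit] at h1
      exact h1
    have hcntpos : (1:ℤ) ≤ cnt b := by
      have h1 : 0 < Multiset.card (R.filter (fun y => j y = b)) :=
        Multiset.card_pos_iff_exists_mem.mpr ⟨x, Multiset.mem_filter.mpr ⟨hx, rfl⟩⟩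
      simp only [hcnt]
      exact_mod_cast h1
    have hPbne : P.coeff b ≠ 0 := by
      intro h0
      have h1 := hterm b (Finset.mem_range.mpr hbN)
      rw [h0, abs_zero] at h1
      linarith [hcntpos]
    have hmod : b % M = r0 := by
      by_contra hne
      exact hPbne (by rw [hPb]; exact hrest (b % M) (Nat.mod_lt b hM0) hne)
    have hPbval : P.coeff b = Q.eval 1 := by rw [hPb, hmod, hdr0]
    have hcnt1 : cnt b = 1 := by
      have h1 := hterm b (Finset.mem_range.mpr hbN)
      rw [hPbval, habs1] at h1
      exact h1.symm
    have hcard1 : Multiset.card (R.filter (fun y => j y = b)) = 1 := by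
      have := hcnt1
      simp only [hcnt] at this
      exact_mod_cast this
    obtain ⟨y, hy⟩ := Multiset.card_eq_one.mp hcard1
    have hxy : x = y := by
      have hxmem : x ∈ R.filter (fun y => j y = b) := Multiset.mem_filter.mpr ⟨hx, rfl⟩
      rw [hy] at hxmem
      exact Multiset.mem_singleton.mp hxmem
    have hex : e x = Q.eval 1 := by
      have h1 := hcoeff_filter b
      rw [hy, ← hxy] at h1
      simp at h1
      rw [← h1]
      exact hPbval
    exact ⟨hmod, hex, hcard1⟩
  -- nodup
  have hnodup : R.Nodup := by
    rw [Multiset.nodup_iff_count_le_one]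
    intro x
    by_cases hx : x ∈ R
    · have h1 := (hmain x hx).2.2
      have h2 : Multiset.count x R ≤ Multiset.card (R.filter (fun y => j y = j x)) := by
        rw [Multiset.count_eq_card_filter_eq]
        exact Multiset.card_le_card (Multiset.monotone_filter_right R fun y hy => by rw [← hy])
      omega
    · simp [Multiset.count_eq_zero_of_notMem hx]
  -- conclusion
  refine ⟨r0, hr0, ((Q.eval 1 : ℤ) : k), ?_, hnodup, ?_⟩
  · rcases hs' with h|h <;> rw [h] <;> [left; right] <;> push_cast <;> ring
  · intro x hx
    obtain ⟨hmod, hex, -⟩ := hmain x hx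
    have hbsplit : M * (j x / M) + r0 = j x := by rw [← hmod]; exact Nat.div_add_mod _ _
    rw [hxej x hx, mul_pow, ← pow_mul]
    have h1 : ((e x : ℤ) : k) ^ p = ((e x : ℤ) : k) := by
      rcases hsgn x hx with h|h <;> rw [h] <;> push_cast
      · rw [one_pow]
      · rw [hodd.neg_one_pow]
    rw [h1, hex]
    congr 1
    have h3 : (M * (j x / M) + r0) * p = N * (j x / M) + r0 * p := by rw [← hMp]; ring
    rw [← hbsplit, h3, pow_add, pow_mul, hω.pow_eq_one, one_pow, one_mul]
theorem stmt_2 {k : Type*} [Field k] [IsAlgClosed k] [CharZero k]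
    {V : Type*} [AddCommGroup V] [Module k V]
    (p : ℕ) (hp : p.Prime) (hodd : Odd p) (n : ℕ) (hn : 1 ≤ n)
    (ω : k) (hω : IsPrimitiveRoot ω (p ^ n))
    (hdim : Module.finrank k V = p)
    (T : Module.End k V) (hT : T ^ (2 * p ^ n) = 1)
    (htr : LinearMap.trace k V T = 0) :
    ∃ m : ℕ, m ≤ p ^ (n - 1) - 1 ∧
      (T ^ p = (ω ^ (m * p)) • (1 : Module.End k V) ∨
       T ^ p = -((ω ^ (m * p)) • (1 : Module.End k V))) := by
  classical
  have hfin : FiniteDimensional k V := FiniteDimensional.of_finrank_pos (by rw [hdim]; exact hp.pos)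
  set b : Module.Basis (Fin (Module.finrank k V)) k V := Module.finBasis k V with hbdef
  set χ := LinearMap.charpoly T with hχ
  have hmonic : χ.Monic := LinearMap.charpoly_monic T
  have hdeg : χ.natDegree = p := by rw [hχ, LinearMap.charpoly_natDegree, hdim]
  have hsplit : Splits χ := IsAlgClosed.splits χ
  set R := χ.roots with hR
  have hcard : Multiset.card R = p := by rw [hR, Polynomial.splits_iff_card_roots.mp hsplit, hdeg]
  have hsum : R.sum = 0 := by
    have h1 : LinearMap.trace k V T = ((LinearMap.toMatrix b b) T).trace :=
      LinearMap.trace_eq_matrix_trace k b T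
    have h2 : ((LinearMap.toMatrix b b) T).trace
        = ((LinearMap.toMatrix b b) T).charpoly.roots.sum :=
      Matrix.trace_eq_sum_roots_charpoly _
    rw [LinearMap.charpoly_toMatrix T b, ← hχ] at h2
    rw [htr] at h1
    rw [hR, ← h2, ← h1]
  have hunit : ∀ x ∈ R, x ^ (2 * p ^ n) = 1 := by
    intro x hx
    have hroot : χ.IsRoot x := (Polynomial.mem_roots hmonic.ne_zero).mp hx
    set A := (LinearMap.toMatrix b b) T with hA
    have hchA : A.charpoly = χ := LinearMap.charpoly_toMatrix T b
    have hdet : (Matrix.scalar (Fin (Module.finrank k V)) x - A).det = 0 := by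
      have h0 : eval x A.charpoly = 0 := by rw [hchA]; exact hroot
      rw [Matrix.charpoly, _root_.eval_det, Matrix.matPolyEquiv_charmatrix] at h0
      rw [← h0]
      congr 1
      rw [eval_sub, eval_X, eval_C]
    obtain ⟨v, hv0, hv⟩ := Matrix.exists_mulVec_eq_zero_iff.mpr hdet
    rw [Matrix.sub_mulVec] at hv
    have hscal : (Matrix.scalar (Fin (Module.finrank k V)) x).mulVec v = x • v := by
      have h1 : Matrix.scalar (Fin (Module.finrank k V)) x
          = x • (1 : Matrix (Fin (Module.finrank k V)) (Fin (Module.finrank k V)) k) := by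
        ext i l
        simp [Matrix.scalar_apply, Matrix.smul_apply, Matrix.one_apply, Matrix.diagonal_apply]
      rw [h1, Matrix.smul_mulVec, Matrix.one_mulVec]
    have hAv : A.mulVec v = x • v := by
      rw [hscal] at hv
      have := sub_eq_zero.mp hv
      exact this.symm
    have hpow : ∀ i : ℕ, (A ^ i).mulVec v = x ^ i • v := by
      intro i
      induction i with
      | zero => simp [Matrix.one_mulVec]
      | succ i ih =>
        rw [pow_succ, ← Matrix.mulVec_mulVec, hAv, Matrix.mulVec_smul, ih, smul_smul, ← pow_succ']
    have hA1 : A ^ (2 * p ^ n) = 1 := by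
      have h1 : A = (LinearMap.toMatrixAlgEquiv b) T := rfl
      rw [h1, ← map_pow, hT, map_one]
    have hxv := hpow (2 * p ^ n)
    rw [hA1, Matrix.one_mulVec] at hxv
    obtain ⟨i0, hi0⟩ := Function.ne_iff.mp hv0
    have h2 : v i0 = (x ^ (2 * p ^ n) • v) i0 := by rw [← hxv]
    rw [Pi.smul_apply, smul_eq_mul] at h2
    have h3 : (x ^ (2 * p ^ n) - 1) * v i0 = 0 := by
      rw [sub_mul, one_mul, ← h2, sub_self]
    rcases mul_eq_zero.mp h3 with h | h
    · exact sub_eq_zero.mp h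
    · exact absurd h hi0
  obtain ⟨m, hm, s, hs, hnodup, hxp⟩ := key_lemma p n hp hodd hn ω hω R hcard hsum hunit
  set c := s * ω ^ (m * p) with hc
  set g : Polynomial k := X ^ p - C c with hg
  have hgmonic : g.Monic := monic_X_pow_sub_C c hp.ne_zero
  have hgdeg : g.natDegree = p := natDegree_X_pow_sub_C
  have hRle : R ≤ g.roots := by
    rw [Multiset.le_iff_count]
    intro x
    by_cases hx : x ∈ R
    · have h1 : Multiset.count x R ≤ 1 := Multiset.nodup_iff_count_le_one.mp hnodup x
      have h2 : x ∈ g.roots := by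
        rw [Polynomial.mem_roots hgmonic.ne_zero]
        show g.eval x = 0
        rw [hg]
        simp [hxp x hx, hc]
      exact h1.trans (Multiset.one_le_count_iff_mem.mpr h2)
    · rw [Multiset.count_eq_zero_of_notMem hx]
      exact Nat.zero_le _
  have hdvd : χ ∣ g := by
    have hfact : χ = (R.map (fun a => X - C a)).prod :=
      hsplit.eq_prod_roots_of_monic hmonic
    rw [hfact]
    calc (R.map (fun a => X - C a)).prod
        ∣ (g.roots.map (fun a => X - C a)).prod :=
          Multiset.prod_dvd_prod_of_le (Multiset.map_le_map hRle)
      _ ∣ g := prod_multiset_X_sub_C_dvd g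
  have hχg : χ = g := by
    obtain ⟨u, hu⟩ := hdvd
    have hu0 : u ≠ 0 := by
      rintro rfl
      rw [mul_zero] at hu
      exact hgmonic.ne_zero hu
    have hdu : u.natDegree = 0 := by
      have h1 := Polynomial.natDegree_mul hmonic.ne_zero hu0
      rw [← hu, hgdeg, hdeg] at h1
      omega
    obtain ⟨a, ha⟩ := Polynomial.natDegree_eq_zero.mp hdu
    have ha1 : a = 1 := by
      have h1 : g.leadingCoeff = χ.leadingCoeff * u.leadingCoeff := by
        rw [hu, Polynomial.leadingCoeff_mul]
      rw [hgmonic.leadingCoeff, hmonic.leadingCoeff, one_mul, ← ha,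
        Polynomial.leadingCoeff_C] at h1
      exact h1.symm
    rw [hu, ← ha, ha1, Polynomial.C_1, mul_one]
  have hch := LinearMap.aeval_self_charpoly T
  rw [← hχ, hχg, hg] at hch
  rw [map_sub, map_pow, aeval_X, aeval_C] at hch
  have halg : (algebraMap k (Module.End k V)) c = c • (1 : Module.End k V) := by
    rw [Module.algebraMap_end_eq_smul_id]
    rfl
  rw [halg] at hch
  have hTp : T ^ p = c • (1 : Module.End k V) := by
    have := sub_eq_zero.mp hch
    exact this
  refine ⟨m, by omega, ?_⟩
  rcases hs with h | h
  · left
    rw [hTp, hc, h, one_mul]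
  · right
    rw [hTp, hc, h, neg_mul, one_mul, neg_smul]
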